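/- arXiv:1604.03459 — 9 statements merged into one kernel-verified Lean document; each statement's English description precedes it below -/
import Mathlib

section
/- Let G be a finite abelian group and p a prime dividing |G|. Then G has an arithmetically-free subset X with |X|/|G| = 1 - 1/p. -/
open Finset

lemma exists_surjective_to_zmod {G : Type*} [AddCommGroup G] [Fintype G] (p : ℕ)
    (hp : p.Prime) (hdvd : p ∣ Fintype.card G) :
    ∃ f : G →+ ZMod p, Function.Surjective f := by
  classical
  obtain ⟨ι, hι, n, hn, ⟨e⟩⟩ := AddCommGroup.equiv_directSum_zmod_of_finite' G
  haveI : ∀ i, NeZero (n i) := fun i => ⟨by have := hn i; omega⟩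
  have e2 : G ≃ ∀ i, ZMod (n i) := e.toEquiv.trans DFinsupp.equivFunOnFintype
  have hcard : Fintype.card G = ∏ i, n i := by
    rw [Fintype.card_congr e2, Fintype.card_pi]
    simp [ZMod.card]
  rw [hcard] at hdvd
  obtain ⟨i, -, hi⟩ := hp.prime.exists_mem_finset_dvd hdvd
  haveI : NeZero p := ⟨hp.ne_zero⟩
  refine ⟨((ZMod.castHom hi (ZMod p)).toAddMonoidHom.comp
    ((DFinsupp.evalAddMonoidHom i).comp e.toAddMonoidHom)), ?_⟩
  have h1 : Function.Surjective (ZMod.castHom hi (ZMod p)) :=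
    ZMod.ringHom_surjective _
  have h2 : Function.Surjective (DFinsupp.evalAddMonoidHom (β := fun i => ZMod (n i)) i) := by
    intro x
    exact ⟨DFinsupp.single i x, by simp [DFinsupp.evalAddMonoidHom, DFinsupp.coeFnAddMonoidHom]⟩
  have h3 : Function.Surjective e.toAddMonoidHom := e.surjective
  exact h1.comp (h2.comp h3)

/-- If a prime `p` divides the order of a finite abelian group `G`, then `G` has an
arithmetically-free subset of density `1 - 1/p`. -/
theorem arithmeticallyFree_of_density {G : Type*} [AddCommGroup G] [Fintype G] (p : ℕ)
    (hp : p.Prime) (hdvd : p ∣ Fintype.card G) :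
    ∃ X : Finset G, (¬ ∃ x ∈ X, ∃ y ∈ X, ∀ n : ℕ, x + n • y ∈ X) ∧
      p * X.card = (p - 1) * Fintype.card G := by
  classical
  haveI : Fact p.Prime := ⟨hp⟩
  obtain ⟨f, hf⟩ := exists_surjective_to_zmod p hp hdvd
  refine ⟨univ.filter (fun g => f g ≠ 0), ?_, ?_⟩
  · rintro ⟨x, hx, y, hy, h⟩
    simp only [mem_filter, mem_univ, true_and] at hx hy h
    set m : ℕ := ((-f x) * (f y)⁻¹).val with hm
    apply h m
    have hfeq : f (x + m • y) = f x + (m : ZMod p) * f y := by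
      simp [map_add, map_nsmul, nsmul_eq_mul]
    rw [hfeq, hm, ZMod.natCast_val, ZMod.cast_id]
    field_simp
    ring
  · set k := (univ.filter (fun g => f g = 0)).card with hkdef
    have hker : Fintype.card G = p * k := by
      have h1 : Nat.card G = Nat.card (G ⧸ f.ker) * Nat.card f.ker :=
        AddSubgroup.card_eq_card_quotient_mul_card_addSubgroup f.ker
      have hq : Nat.card (G ⧸ f.ker) = p := by
        rw [Nat.card_congr (QuotientAddGroup.quotientKerEquivOfSurjective f hf).toEquiv,
          Nat.card_zmod]
      have hk : Nat.card f.ker = k := by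
        rw [Nat.card_eq_fintype_card, Fintype.card_subtype, hkdef]
        congr 1
        ext g
        simp [AddMonoidHom.mem_ker]
      rw [← Nat.card_eq_fintype_card, h1, hq, hk]
    have hsplit : (univ.filter (fun g => f g ≠ 0)).card = Fintype.card G - k := by
      rw [Finset.filter_not, Finset.card_sdiff_of_subset (Finset.filter_subset _ _),
        Finset.card_univ, hkdef]
    rw [hsplit, hker]
    obtain ⟨q, rfl⟩ : ∃ q, p = q + 1 := ⟨p - 1, by have := hp.pos; omega⟩
    have h2 : (q + 1) * k - k = q * k := by rw [add_mul, one_mul, Nat.add_sub_cancel]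
    rw [h2]
    simp only [Nat.add_sub_cancel]
    ring
end

section
/- (Growth or capture) Let (G,+) be an abelian group, X ⊆ G \ {0} a finite subset, and S = (a_1, ..., a_k) a sequence of elements of X. Then either |SubSum(S)| ≥ k+1, or SubSum(S) contains a full arithmetic progression a, a+b, a+2b, ... with increment b ∈ X. -/
/-- Growth or capture: for a sequence `a₁, …, a_k` on a finite set `X ⊆ G \ {0}`, either
the set of sub-sums has at least `k+1` elements, or it contains a full arithmetic
progression with increment in `X`. -/
theorem subSum_growth_or_capture {G : Type*} [AddCommGroup G] (X : Set G) (hX : X.Finite)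
    (h0 : (0 : G) ∉ X) (k : ℕ) (a : Fin k → G) (ha : ∀ i, a i ∈ X) :
    k + 1 ≤ {g : G | ∃ I : Finset (Fin k), ∑ i ∈ I, a i = g}.ncard ∨
      ∃ c ∈ {g : G | ∃ I : Finset (Fin k), ∑ i ∈ I, a i = g}, ∃ b ∈ X,
        ∀ n : ℕ, c + n • b ∈ {g : G | ∃ I : Finset (Fin k), ∑ i ∈ I, a i = g} := by
  classical
  set f : Finset (Fin k) → G := fun I => ∑ i ∈ I, a i with hf
  set T : ℕ → Finset G := fun j =>
    ((Finset.univ.filter (fun i : Fin k => (i : ℕ) < j)).powerset).image f with hT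
  have hT0 : (0 : G) ∈ T 0 := by
    simp only [hT, Finset.mem_image, Finset.mem_powerset]
    exact ⟨∅, Finset.empty_subset _, by simp [hf]⟩
  have hTsub : ∀ j, T j ⊆ T (j + 1) := by
    intro j g hg
    simp only [hT, Finset.mem_image, Finset.mem_powerset] at hg ⊢
    obtain ⟨I, hI, rfl⟩ := hg
    refine ⟨I, hI.trans (Finset.monotone_filter_right _ ?_), rfl⟩
    intro i hi; omega
  have hstep : ∀ (j : ℕ) (hj : j < k), ∀ x ∈ T j, x + a ⟨j, hj⟩ ∈ T (j + 1) := by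
    intro j hj x hx
    simp only [hT, Finset.mem_image, Finset.mem_powerset] at hx ⊢
    obtain ⟨I, hI, rfl⟩ := hx
    have hjI : (⟨j, hj⟩ : Fin k) ∉ I := by
      intro hmem
      have := hI hmem
      simp only [Finset.mem_filter] at this
      omega
    refine ⟨insert ⟨j, hj⟩ I, ?_, ?_⟩
    · intro i hi
      simp only [Finset.mem_insert] at hi
      rcases hi with rfl | hi
      · simp
      · have := hI hi
        simp only [Finset.mem_filter] at this ⊢
        exact ⟨this.1, by omega⟩
    · simp only [hf, Finset.sum_insert hjI]
      exact add_comm _ _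
  have hT0' : ∀ j, (0 : G) ∈ T j := by
    intro j
    induction j with
    | zero => exact hT0
    | succ m ihm => exact hTsub m ihm
  have hmemT : ∀ j, ∀ g ∈ T j, g ∈ {g : G | ∃ I : Finset (Fin k), ∑ i ∈ I, a i = g} := by
    intro j g hg
    simp only [hT, Finset.mem_image, Finset.mem_powerset] at hg
    obtain ⟨I, _, rfl⟩ := hg
    exact ⟨I, rfl⟩
  by_cases H : ∀ j < k, (T j).card < (T (j + 1)).card
  · left
    have hcard : ∀ j ≤ k, j + 1 ≤ (T j).card := by
      intro j
      induction j with
      | zero => intro _; exact Finset.card_pos.mpr ⟨0, hT0⟩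
      | succ n ih =>
        intro hn
        have h1 := ih (by omega)
        have h2 := H n (by omega)
        omega
    have hset : {g : G | ∃ I : Finset (Fin k), ∑ i ∈ I, a i = g} = ↑(T k) := by
      ext g
      simp only [hT, Finset.coe_image, Set.mem_image, Finset.mem_coe,
        Finset.mem_powerset, Set.mem_setOf_eq]
      constructor
      · rintro ⟨I, rfl⟩
        exact ⟨I, by intro i hi; simp [Fin.is_lt], rfl⟩
      · rintro ⟨I, _, rfl⟩
        exact ⟨I, rfl⟩
    rw [hset, Set.ncard_coe_finset]
    exact hcard k le_rfl
  · right
    push_neg at H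
    obtain ⟨j, hj, hle⟩ := H
    have heq : T (j + 1) = T j :=
      (Finset.eq_of_subset_of_card_le (hTsub j) hle).symm
    have hclosed : ∀ x ∈ T j, x + a ⟨j, hj⟩ ∈ T j := by
      intro x hx
      rw [← heq]
      exact hstep j hj x hx
    refine ⟨0, ⟨∅, by simp⟩, a ⟨j, hj⟩, ha _, ?_⟩
    intro n
    have hn : (n : ℕ) • a ⟨j, hj⟩ ∈ T j := by
      induction n with
      | zero => simpa using hT0' j
      | succ m ihm =>
        have := hclosed _ ihm
        rw [succ_nsmul]
        exact this
    simpa using hmemT j _ hn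
end

section
/- Let X be a finite arithmetically-free subset of an abelian group (G,+). Then for all a, b_1, ..., b_{|X|} ∈ X there exists a subset I ⊆ {1, ..., |X|} with a + Σ_{i ∈ I} b_i ∉ X. -/
/-- Quantitative form with `δ = |X|`: if `X` is arithmetically-free, then for all
`a, b₁, …, b_{|X|} ∈ X` some partial sum escapes: `a + ∑_{i ∈ I} bᵢ ∉ X`. -/
theorem arithmeticallyFree_escape {G : Type*} [AddCommGroup G] (X : Finset G)
    (hfree : ¬ ∃ x ∈ X, ∃ y ∈ X, ∀ n : ℕ, x + n • y ∈ X) :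
    ∀ a ∈ X, ∀ b : Fin X.card → G, (∀ i, b i ∈ X) →
      ∃ I : Finset (Fin X.card), a + ∑ i ∈ I, b i ∉ X := by
  classical
  intro a ha b hb
  by_contra h
  push_neg at h
  let S : ℕ → Finset G := fun k =>
    ((Finset.univ.filter (fun i : Fin X.card => (i : ℕ) < k)).powerset).image
      (fun I => a + ∑ i ∈ I, b i)
  have hSsub : ∀ k, S k ⊆ X := by
    intro k x hx
    simp only [S, Finset.mem_image] at hx
    obtain ⟨I, _, rfl⟩ := hx
    exact h I
  have hSne : ∀ k, a ∈ S k := by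
    intro k
    simp only [S, Finset.mem_image]
    exact ⟨∅, by simp, by simp⟩
  have hmono : ∀ k, S k ⊆ S (k + 1) := by
    intro k x hx
    simp only [S, Finset.mem_image, Finset.mem_powerset] at hx ⊢
    obtain ⟨I, hI, rfl⟩ := hx
    refine ⟨I, fun i hi => ?_, rfl⟩
    have := hI hi
    simp only [Finset.mem_filter, Finset.mem_univ, true_and] at this ⊢
    omega
  have hex : ∃ k < X.card, S k = S (k + 1) := by
    by_contra hc
    push_neg at hc
    have hcard : ∀ k ≤ X.card, k + 1 ≤ (S k).card := by
      intro k hk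
      induction k with
      | zero => simpa using Finset.card_pos.2 ⟨a, hSne 0⟩
      | succ n ih =>
        have h1 : n + 1 ≤ (S n).card := ih (by omega)
        have hss : S n ⊂ S (n + 1) :=
          (Finset.ssubset_iff_subset_ne).2 ⟨hmono n, hc n (by omega)⟩
        have := Finset.card_lt_card hss
        omega
    have h1 := hcard X.card le_rfl
    have h2 := Finset.card_le_card (hSsub X.card)
    omega
  obtain ⟨k, hkN, hSeq⟩ := hex
  set y := b ⟨k, hkN⟩ with hy
  have hstep : ∀ x ∈ S k, x + y ∈ S k := by
    intro x hx
    simp only [S, Finset.mem_image, Finset.mem_powerset] at hx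
    obtain ⟨I, hI, rfl⟩ := hx
    have hknotin : (⟨k, hkN⟩ : Fin X.card) ∉ I := by
      intro hmem
      have := hI hmem
      simp [Finset.mem_filter] at this
    rw [hSeq]
    simp only [S, Finset.mem_image, Finset.mem_powerset]
    refine ⟨insert ⟨k, hkN⟩ I, ?_, ?_⟩
    · intro i hi
      simp only [Finset.mem_insert] at hi
      simp only [Finset.mem_filter, Finset.mem_univ, true_and]
      rcases hi with rfl | hi
      · simp
      · have := hI hi
        simp only [Finset.mem_filter, Finset.mem_univ, true_and] at this
        omega
    · rw [Finset.sum_insert hknotin]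
      abel
  have hall : ∀ n : ℕ, a + n • y ∈ S k := by
    intro n
    induction n with
    | zero => simpa using hSne k
    | succ m ih =>
      have := hstep _ ih
      convert this using 1
      rw [succ_nsmul]
      abel
  exact hfree ⟨a, ha, y, by rw [hy]; exact hb _, fun n => hSsub k (hall n)⟩
end

section
/- A finite abelian group (T,+) admits a good-ordering if and only if T is cyclic. Moreover, if T is cyclic with generator t and |T| = n, then the ordering t < 2t < ... < nt = 0 is a good-ordering. -/
/-- `r` is a good-ordering of the subset `X` of an abelian group: a (strict) total order
on `X` such that there are no `x, y ∈ X` with `x + y ∈ X` and `x < x + y < y`. -/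
def IsGoodOrdering {G : Type*} [AddCommGroup G] (X : Set G) (r : G → G → Prop) : Prop :=
  (∀ x ∈ X, ¬ r x x) ∧
  (∀ x ∈ X, ∀ y ∈ X, ∀ z ∈ X, r x y → r y z → r x z) ∧
  (∀ x ∈ X, ∀ y ∈ X, x ≠ y → r x y ∨ r y x) ∧
  (∀ x ∈ X, ∀ y ∈ X, x + y ∈ X → ¬ (r x (x + y) ∧ r (x + y) y))

/-- A finite totally ordered set has a minimum. -/
lemma goodOrdering_aux_min {T : Type*} (r : T → T → Prop)
    (htrans : ∀ x y z, r x y → r y z → r x z)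
    (htri : ∀ x y, x ≠ y → r x y ∨ r y x) :
    ∀ s : Finset T, s.Nonempty → ∃ a ∈ s, ∀ b ∈ s, b ≠ a → r a b := by
  classical
  intro s
  induction s using Finset.induction with
  | empty => intro h; simp at h
  | @insert x s hx ih =>
    intro _
    rcases s.eq_empty_or_nonempty with hs | hs
    · subst hs
      exact ⟨x, by simp, by simp⟩
    · obtain ⟨a, ha, hmin⟩ := ih hs
      by_cases hxa : x = a
      · refine ⟨a, by simp [ha], ?_⟩
        intro b hb hba
        rcases Finset.mem_insert.1 hb with h | h
        · exact absurd (h.trans hxa) hba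
        · exact hmin b h hba
      · rcases htri x a hxa with h | h
        · refine ⟨x, by simp, ?_⟩
          intro b hb hbx
          rcases Finset.mem_insert.1 hb with h' | h'
          · exact absurd h' hbx
          · by_cases hba : b = a
            · exact hba ▸ h
            · exact htrans x a b h (hmin b h' hba)
        · refine ⟨a, by simp [ha], ?_⟩
          intro b hb hba
          rcases Finset.mem_insert.1 hb with h' | h'
          · exact h' ▸ h
          · exact hmin b h' hba

/-- The second part: the canonical ordering from a generator is a good ordering. -/
lemma goodOrdering_of_gen {T : Type*} [AddCommGroup T] [Fintype T] (t : T)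
    (ht : ∀ x : T, x ∈ AddSubgroup.zmultiples t) :
    IsGoodOrdering (Set.univ : Set T)
      (fun x y => ∃ i j : ℕ, 1 ≤ i ∧ i < j ∧ j ≤ Fintype.card T ∧
        x = i • t ∧ y = j • t) := by
  set n := Fintype.card T with hn
  have hord : addOrderOf t = n := by
    rw [addOrderOf_eq_card_of_forall_mem_zmultiples ht, Nat.card_eq_fintype_card]
  have hnpos : 0 < n := Fintype.card_pos
  -- uniqueness of the index in [1, n]
  have huniq : ∀ i j : ℕ, 1 ≤ i → i ≤ n → 1 ≤ j → j ≤ n → i • t = j • t → i = j := by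
    have key : ∀ i j : ℕ, i ≤ j → 1 ≤ i → j ≤ n → i • t = j • t → i = j := by
      intro i j hij h1 hjn he
      have : (j - i) • t = 0 := by
        have := sub_eq_zero.2 he.symm
        rwa [← Nat.sub_add_cancel hij, add_nsmul, add_sub_cancel_right] at this
      have hd : n ∣ j - i := hord ▸ addOrderOf_dvd_of_nsmul_eq_zero this
      have : j - i = 0 := Nat.eq_zero_of_dvd_of_lt hd (by omega)
      omega
    intro i j h1i hin h1j hjn he
    rcases le_total i j with h | h
    · exact key i j h h1i hjn he
    · exact (key j i h h1j hin he.symm).symm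
  -- existence of the index
  have hsurj : ∀ x : T, ∃ i : ℕ, 1 ≤ i ∧ i ≤ n ∧ x = i • t := by
    intro x
    obtain ⟨k, hk⟩ := AddSubgroup.mem_zmultiples_iff.1 (ht x)
    have hnt : (n : ℤ) • t = 0 := by
      have : n • t = 0 := hord ▸ addOrderOf_nsmul_eq_zero t
      simpa using this
    have haux : ((n : ℤ) * (k / n)) • t = 0 := by
      rw [mul_comm, mul_zsmul, hnt, smul_zero]
    have hmod : ((k % n : ℤ)) • t = x := by
      rw [← hk]
      conv_rhs => rw [← Int.emod_add_mul_ediv k n]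
      rw [add_zsmul, haux, add_zero]
    set m : ℕ := (k % n).toNat with hm
    have hm0 : 0 ≤ k % n := Int.emod_nonneg k (by exact_mod_cast hnpos.ne')
    have hmlt : (k % n) < n := Int.emod_lt_of_pos k (by exact_mod_cast hnpos)
    have hxm : x = m • t := by
      rw [← hmod, ← natCast_zsmul, hm, Int.toNat_of_nonneg hm0]
    by_cases hm' : m = 0
    · refine ⟨n, hnpos, le_refl n, ?_⟩
      rw [hxm, hm', zero_smul]
      exact (hord ▸ addOrderOf_nsmul_eq_zero t).symm
    · exact ⟨m, by omega, by omega, hxm⟩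
  refine ⟨?_, ?_, ?_, ?_⟩
  · rintro x - ⟨i, j, h1, hij, hjn, hx, hy⟩
    exact absurd (huniq i j h1 (by omega) (by omega) hjn (hx ▸ hy ▸ rfl)) (by omega)
  · rintro x - y - z - ⟨i, j, h1i, hij, hjn, hx, hy⟩ ⟨j', k, h1j, hjk, hkn, hy', hz⟩
    have : j = j' := huniq j j' (by omega) hjn (by omega) (by omega) (hy ▸ hy' ▸ rfl)
    exact ⟨i, k, h1i, by omega, hkn, hx, hz⟩
  · rintro x - y - hxy
    obtain ⟨i, h1i, hin, hx⟩ := hsurj x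
    obtain ⟨j, h1j, hjn, hy⟩ := hsurj y
    have hij : i ≠ j := fun h => hxy (by rw [hx, hy, h])
    rcases lt_or_gt_of_ne hij with h | h
    · exact Or.inl ⟨i, j, h1i, h, hjn, hx, hy⟩
    · exact Or.inr ⟨j, i, h1j, h, hin, hy, hx⟩
  · rintro x - y - - ⟨⟨i, j, h1i, hij, hjn, hx, hxy⟩, ⟨j', k, h1j, hjk, hkn, hxy', hy⟩⟩
    have hjj : j = j' := huniq j j' (by omega) hjn (by omega) (by omega) (hxy ▸ hxy' ▸ rfl)
    subst hjj
    have hy2 : y = (j - i) • t := by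
      have h1 : (j - i) • t + i • t = j • t := by
        rw [← add_nsmul, Nat.sub_add_cancel hij.le]
      have h2 : y = j • t - i • t := by rw [← hxy, hx]; abel
      rw [h2, ← h1]; abel
    have : k = j - i := huniq k (j - i) (by omega) hkn (by omega) (by omega) (hy ▸ hy2 ▸ rfl)
    omega

/-- A finite abelian group admits a good-ordering iff it is cyclic; moreover, for a
generator `t` the ordering `t < 2t < ⋯ < nt = 0` is a good-ordering. -/
theorem goodOrdering_iff_cyclic {T : Type*} [AddCommGroup T] [Fintype T] :
    ((∃ r : T → T → Prop, IsGoodOrdering (Set.univ : Set T) r) ↔ IsAddCyclic T) ∧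
    (∀ t : T, (∀ x : T, x ∈ AddSubgroup.zmultiples t) →
      IsGoodOrdering (Set.univ : Set T)
        (fun x y => ∃ i j : ℕ, 1 ≤ i ∧ i < j ∧ j ≤ Fintype.card T ∧
          x = i • t ∧ y = j • t)) := by
  constructor
  · constructor
    · rintro ⟨r, hirr, htrans, htri, hgood⟩
      simp only [Set.mem_univ, forall_true_left, true_implies] at hirr htrans htri hgood
      by_cases hsub : ∀ x : T, x = 0
      · refine ⟨⟨0, fun x => ?_⟩⟩
        rw [hsub x]
        exact AddSubgroup.zero_mem (AddSubgroup.zmultiples (0 : T))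
      push_neg at hsub
      obtain ⟨w, hw⟩ := hsub
      classical
      -- minimum of the nonzero elements
      obtain ⟨a, ha, hamin⟩ := goodOrdering_aux_min r
        (fun x y z => htrans x y z) (fun x y => htri x y)
        (Finset.univ.erase 0) ⟨w, Finset.mem_erase.2 ⟨hw, Finset.mem_univ w⟩⟩
      have ha0 : a ≠ 0 := (Finset.mem_erase.1 ha).1
      have hamin' : ∀ z : T, z ≠ 0 → z ≠ a → r a z := fun z hz hza =>
        hamin z (Finset.mem_erase.2 ⟨hz, Finset.mem_univ z⟩) hza
      -- key step lemma
      have hstep : ∀ y : T, y ≠ 0 → y + a ≠ 0 → r y (y + a) := by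
        intro y hy hya
        have h1 : r a (a + y) := by
          apply hamin'
          · rwa [add_comm]
          · intro h
            exact hy (by simpa using congrArg (· - a) h)
        have h2 : ¬ r (a + y) y := fun h => hgood a y ⟨h1, h⟩
        have h3 : y ≠ a + y := fun h => ha0 (by simpa using congrArg (· - y) h.symm)
        rcases htri y (a + y) h3 with h | h
        · rwa [add_comm] at h
        · exact absurd h h2
      -- every element is a multiple of a
      refine ⟨⟨a, fun z => ?_⟩⟩
      by_contra hz
      have hz0 : ∀ k : ℕ, z + k • a ≠ 0 := by
        intro k h
        apply hz
        have h2 : z = -(k • a) := eq_neg_of_add_eq_zero_left h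
        rw [h2]
        exact AddSubgroup.neg_mem _
          (AddSubgroup.nsmul_mem _ (AddSubgroup.mem_zmultiples a) k)
      have hchain : ∀ k : ℕ, 1 ≤ k → r z (z + k • a) := by
        intro k hk
        induction k with
        | zero => omega
        | succ m ih =>
          by_cases hm : m = 0
          · subst hm
            simpa using hstep z (by simpa using hz0 0) (by simpa using hz0 1)
          · have h1 := ih (by omega)
            have h2 : r (z + m • a) (z + (m + 1) • a) := by
              have := hstep (z + m • a) (hz0 m) (by
                have := hz0 (m + 1)
                rwa [succ_nsmul, ← add_assoc] at this)
              rwa [succ_nsmul, ← add_assoc]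
            exact htrans _ _ _ h1 h2
      have hcard : z + Fintype.card T • a = z := by
        rw [card_nsmul_eq_zero, add_zero]
      have := hchain (Fintype.card T) Fintype.card_pos
      rw [hcard] at this
      exact hirr z this
    · rintro ⟨⟨t, ht⟩⟩
      exact ⟨_, goodOrdering_of_gen t ht⟩
  · exact fun t ht => goodOrdering_of_gen t ht
end

section
/- A finitely-generated abelian group (G,+) admits a good-ordering if and only if the torsion subgroup of G is cyclic. -/
private lemma fract_good (u v : ℝ) :
    ¬ (Int.fract u < Int.fract (u + v) ∧ Int.fract (u + v) < Int.fract v) := by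
  have huv : u + v = (Int.fract u + Int.fract v) + ((⌊u⌋ + ⌊v⌋ : ℤ) : ℝ) := by
    rw [Int.fract, Int.fract]; push_cast; ring
  rw [huv, Int.fract_add_intCast]
  have h1 : (0:ℝ) ≤ Int.fract u := Int.fract_nonneg u
  have h2 : Int.fract u < 1 := Int.fract_lt_one u
  have h3 : (0:ℝ) ≤ Int.fract v := Int.fract_nonneg v
  have h4 : Int.fract v < 1 := Int.fract_lt_one v
  rcases lt_or_ge (Int.fract u + Int.fract v) 1 with h | h
  · rw [Int.fract_eq_self.mpr ⟨by linarith, h⟩]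
    rintro ⟨_, _⟩; linarith
  · have he : Int.fract (Int.fract u + Int.fract v) = Int.fract u + Int.fract v - 1 := by
      rw [show Int.fract u + Int.fract v
            = (Int.fract u + Int.fract v - 1) + ((1:ℤ):ℝ) by norm_num,
        Int.fract_add_intCast, Int.fract_eq_self.mpr ⟨by linarith, by linarith⟩]
      push_cast
      ring
    rw [he]; rintro ⟨_, _⟩; linarith

private lemma IsGoodOrdering.comap {G H : Type*} [AddCommGroup G] [AddCommGroup H]
    {s : H → H → Prop} (hs : IsGoodOrdering (Set.univ : Set H) s)
    (f : G →+ H) (hf : Function.Injective f) :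
    IsGoodOrdering (Set.univ : Set G) (fun x y => s (f x) (f y)) := by
  obtain ⟨h1, h2, h3, h4⟩ := hs
  refine ⟨fun x _ => h1 (f x) trivial,
    fun x _ y _ z _ => h2 _ trivial _ trivial _ trivial,
    fun x _ y _ hxy => h3 _ trivial _ trivial (fun h => hxy (hf h)),
    fun x _ y _ _ => by simpa [map_add] using h4 (f x) trivial (f y) trivial trivial⟩

private lemma isAddCyclic_of_isGoodOrdering {T : Type*} [AddCommGroup T] [Finite T]
    {r : T → T → Prop} (hr : IsGoodOrdering (Set.univ : Set T) r) : IsAddCyclic T := by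
  obtain ⟨h1, h2, h3, h4⟩ := hr
  by_cases hT : Subsingleton T
  · exact ⟨0, fun x => ⟨0, Subsingleton.elim _ _⟩⟩
  have : Nontrivial T := not_subsingleton_iff_nontrivial.mp hT
  haveI : IsTrans T r := ⟨fun a b c hab hbc => h2 a trivial b trivial c trivial hab hbc⟩
  haveI : IsIrrefl T r := ⟨fun a => h1 a trivial⟩
  have wf : WellFounded r := Finite.wellFounded_of_trans_of_irrefl r
  obtain ⟨x0, hx0⟩ := exists_ne (0 : T)
  have hS : {x : T | x ≠ 0}.Nonempty := ⟨x0, hx0⟩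
  set m := wf.min {x : T | x ≠ 0} hS with hmdef
  have hm0 : m ≠ 0 := wf.min_mem {x : T | x ≠ 0} hS
  have key : ∀ a : T, ∃ c : ℤ, c • m = a := by
    intro a
    refine wf.induction (C := fun b => ∃ c : ℤ, c • m = b) a ?_
    intro a ih
    by_cases ha0 : a = 0
    · exact ⟨0, by simp [ha0]⟩
    by_cases ham : a = m
    · exact ⟨1, by simp [ham]⟩
    have hma : r m a := by
      rcases h3 m trivial a trivial (fun h => ham h.symm) with h | h
      · exact h
      · exact absurd h (wf.not_lt_min {x : T | x ≠ 0} ha0)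
    have h4' := h4 m trivial (a - m) trivial trivial
    rw [show m + (a - m) = a by abel] at h4'
    have hne : a ≠ a - m := fun h => hm0 (sub_eq_self.mp h.symm)
    have hlt : r (a - m) a := by
      rcases h3 a trivial (a - m) trivial hne with h | h
      · exact absurd ⟨hma, h⟩ h4'
      · exact h
    obtain ⟨c, hc⟩ := ih (a - m) hlt
    exact ⟨c + 1, by rw [add_smul, one_smul, hc]; abel⟩
  exact ⟨m, key⟩

private noncomputable def goodPsi (n k : ℕ) (α : ℝ) : (Fin n →₀ ℤ) × ZMod k → ℝ :=
  fun x => (∑ i : Fin n, (x.1 i : ℝ) * α ^ ((i:ℕ)+1)) + (x.2.val : ℝ) / k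

private lemma exists_goodOrdering_prod (n k : ℕ) (hk : k ≠ 0) :
    ∃ r : ((Fin n →₀ ℤ) × ZMod k) → ((Fin n →₀ ℤ) × ZMod k) → Prop,
      IsGoodOrdering (Set.univ : Set ((Fin n →₀ ℤ) × ZMod k)) r := by
  haveI : NeZero k := ⟨hk⟩
  obtain ⟨α, hα⟩ : ∃ α : ℝ, Transcendental ℤ α := ⟨_, transcendental_liouvilleNumber le_rfl⟩
  rw [transcendental_iff] at hα
  have hli : ∀ g : Fin (n+1) → ℤ, (∑ j : Fin (n+1), (g j : ℝ) * α ^ (j:ℕ)) = 0 →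
      ∀ j, g j = 0 := by
    intro g hg j
    have hP : (∑ j : Fin (n+1), Polynomial.monomial (j:ℕ) (g j)) = 0 := by
      apply hα
      rw [map_sum]
      simpa [Polynomial.aeval_monomial] using hg
    have h2 := congrArg (fun P => Polynomial.coeff P (j:ℕ)) hP
    simpa [Polynomial.finset_sum_coeff, Polynomial.coeff_monomial, Fin.val_eq_val,
      Finset.sum_ite_eq] using h2
  set ψ := goodPsi n k α with hψ
  have hkr : (k:ℝ) ≠ 0 := Nat.cast_ne_zero.mpr hk
  have hinj : ∀ x y, Int.fract (ψ x) = Int.fract (ψ y) → x = y := by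
    intro x y h
    have hM : ψ x - ψ y = ((⌊ψ x⌋ - ⌊ψ y⌋ : ℤ) : ℝ) := by
      have e1 : Int.fract (ψ x) = ψ x - ⌊ψ x⌋ := rfl
      have e2 : Int.fract (ψ y) = ψ y - ⌊ψ y⌋ := rfl
      rw [e1, e2] at h
      push_cast
      linarith
    set M : ℤ := ⌊ψ x⌋ - ⌊ψ y⌋ with hMdef
    set g : Fin (n+1) → ℤ := Fin.cases ((x.2.val : ℤ) - (y.2.val : ℤ) - k * M)
        (fun i => k * (x.1 i - y.1 i)) with hg
    have hrel : (∑ j : Fin (n+1), (g j : ℝ) * α ^ (j:ℕ)) = 0 := by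
      rw [Fin.sum_univ_succ]
      simp only [hg, Fin.cases_zero, Fin.cases_succ, Fin.val_succ, Fin.val_zero, pow_zero]
      have hsum : (∑ i : Fin n, ((k * (x.1 i - y.1 i) : ℤ) : ℝ) * α ^ ((i:ℕ)+1))
          = (k:ℝ) * ((∑ i : Fin n, (x.1 i : ℝ) * α ^ ((i:ℕ)+1))
              - (∑ i : Fin n, (y.1 i : ℝ) * α ^ ((i:ℕ)+1))) := by
        rw [mul_sub, Finset.mul_sum, Finset.mul_sum, ← Finset.sum_sub_distrib]
        apply Finset.sum_congr rfl
        intro i _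
        push_cast
        ring
      have hM2 : (∑ i : Fin n, (x.1 i : ℝ) * α ^ ((i:ℕ)+1))
          - (∑ i : Fin n, (y.1 i : ℝ) * α ^ ((i:ℕ)+1))
          = (M:ℝ) - (x.2.val:ℝ)/k + (y.2.val:ℝ)/k := by
        have h' := hM
        simp only [hψ, goodPsi] at h'
        linarith
      rw [hsum, hM2]
      push_cast
      field_simp
      ring
    have hz := hli g hrel
    have hfst : x.1 = y.1 := by
      ext i
      have := hz i.succ
      simp only [hg, Fin.cases_succ] at this
      rcases mul_eq_zero.mp this with h' | h'
      · exact absurd (Int.natCast_eq_zero.mp h') hk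
      · linarith [sub_eq_zero.mp h']
    have hsnd : x.2 = y.2 := by
      have h0 := hz 0
      simp only [hg, Fin.cases_zero] at h0
      have hb1 : (x.2.val : ℤ) < k := Int.ofNat_lt.mpr (ZMod.val_lt x.2)
      have hb2 : (y.2.val : ℤ) < k := Int.ofNat_lt.mpr (ZMod.val_lt y.2)
      have hb3 : (0:ℤ) ≤ (x.2.val : ℤ) := Int.natCast_nonneg _
      have hb4 : (0:ℤ) ≤ (y.2.val : ℤ) := Int.natCast_nonneg _
      have hkpos : (0:ℤ) < k := by positivity
      have hM0 : M = 0 := by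
        by_contra hM'
        rcases lt_or_gt_of_ne hM' with hlt | hgt
        · have h6 : k * M ≤ k * (-1) := mul_le_mul_of_nonneg_left (by omega) hkpos.le
          have h7 : (k:ℤ) * (-1) = -k := by ring
          linarith
        · have h6 : (k:ℤ) * 1 ≤ k * M := mul_le_mul_of_nonneg_left (by omega) hkpos.le
          have h7 : (k:ℤ) * 1 = k := by ring
          linarith
      rw [hM0, mul_zero, sub_zero, sub_eq_zero] at h0
      exact ZMod.val_injective k (by exact_mod_cast h0)
    exact Prod.ext hfst hsnd
  have hadd : ∀ x y, Int.fract (ψ (x + y)) = Int.fract (ψ x + ψ y) := by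
    intro x y
    have hsum : (∑ i : Fin n, (((x.1 + y.1) i : ℤ):ℝ) * α^((i:ℕ)+1))
        = (∑ i : Fin n, (x.1 i:ℝ)*α^((i:ℕ)+1)) + (∑ i : Fin n, (y.1 i:ℝ)*α^((i:ℕ)+1)) := by
      rw [← Finset.sum_add_distrib]
      apply Finset.sum_congr rfl
      intro i _
      rw [Finsupp.add_apply]
      push_cast
      ring
    have h9 : (x.2.val + y.2.val) % k + k * ((x.2.val + y.2.val)/k) = x.2.val + y.2.val :=
      Nat.mod_add_div _ _
    have h9' : (((x.2.val + y.2.val) % k : ℕ) : ℝ) + k * (((x.2.val + y.2.val)/k : ℕ):ℝ)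
        = (x.2.val:ℝ) + y.2.val := by exact_mod_cast congrArg (Nat.cast : ℕ → ℝ) h9
    have hval : (((x.2 + y.2).val : ℕ) : ℝ)
        = (x.2.val:ℝ) + y.2.val - k * (((x.2.val + y.2.val)/k : ℕ) : ℝ) := by
      rw [ZMod.val_add]
      linarith
    have hpsi : ψ (x + y) = ψ x + ψ y - (((x.2.val + y.2.val)/k : ℕ) : ℝ) := by
      simp only [hψ, goodPsi, Prod.fst_add, Prod.snd_add]
      rw [hsum, hval]
      field_simp
      ring
    rw [hpsi, show (ψ x + ψ y - (((x.2.val + y.2.val)/k : ℕ) : ℝ))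
        = ψ x + ψ y - ((((x.2.val + y.2.val)/k : ℕ) : ℤ) : ℝ) by rw [Int.cast_natCast],
      Int.fract_sub_intCast]
  refine ⟨fun x y => Int.fract (ψ x) < Int.fract (ψ y), ?_, ?_, ?_, ?_⟩
  · exact fun x _ => lt_irrefl _
  · exact fun x _ y _ z _ => lt_trans
  · intro x _ y _ hxy
    rcases lt_trichotomy (Int.fract (ψ x)) (Int.fract (ψ y)) with h | h | h
    · exact Or.inl h
    · exact absurd (hinj x y h) hxy
    · exact Or.inr h
  · intro x _ y _ _
    show ¬ (Int.fract (ψ x) < Int.fract (ψ (x+y)) ∧ Int.fract (ψ (x+y)) < Int.fract (ψ y))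
    rw [hadd x y]
    exact fract_good (ψ x) (ψ y)

set_option maxHeartbeats 400000 in
/-- A finitely-generated abelian group admits a good-ordering iff its torsion subgroup is
cyclic. -/
theorem goodOrdering_iff_torsion_cyclic {G : Type*} [AddCommGroup G] (hfg : AddGroup.FG G) :
    (∃ r : G → G → Prop, IsGoodOrdering (Set.univ : Set G) r) ↔
      IsAddCyclic (AddCommGroup.torsion G) := by
  haveI := hfg
  obtain ⟨n, ι, fι, p, hp, ex, ⟨e⟩⟩ := AddCommGroup.equiv_free_prod_directSum_zmod G
  haveI := fι
  letI : DecidableEq ι := Classical.decEq ι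
  haveI hq : ∀ i, NeZero (p i ^ ex i) := fun i => ⟨pow_ne_zero _ (hp i).pos.ne'⟩
  haveI hDfin : Finite (DirectSum ι (fun i => ZMod (p i ^ ex i))) :=
    @Finite.of_fintype _ (inferInstanceAs (Fintype (Π₀ i : ι, ZMod (p i ^ ex i))))
  let j0 : DirectSum ι (fun i => ZMod (p i ^ ex i)) →+ G := e.symm.toAddMonoidHom.comp (AddMonoidHom.inr _ _)
  have hj0 : Function.Injective j0 := by
    intro a b h
    have h2 := e.symm.injective h
    exact congrArg Prod.snd h2
  have htors : ∀ d : DirectSum ι (fun i => ZMod (p i ^ ex i)), j0 d ∈ AddCommGroup.torsion G := fun d =>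
    j0.isOfFinAddOrder (isOfFinAddOrder_of_finite d)
  let j : DirectSum ι (fun i => ZMod (p i ^ ex i)) →+ AddCommGroup.torsion G := j0.codRestrict _ htors
  have jsurj : Function.Surjective j := by
    rintro ⟨t, ht⟩
    have ht' : IsOfFinAddOrder t := ht
    have hw1 : IsOfFinAddOrder (e t) := e.toAddMonoidHom.isOfFinAddOrder ht'
    have hw : IsOfFinAddOrder (e t).1 :=
      (AddMonoidHom.fst (Fin n →₀ ℤ) (DirectSum ι (fun i => ZMod (p i ^ ex i)))).isOfFinAddOrder hw1
    have hw0 : (e t).1 = 0 := by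
      ext i
      have hwi : IsOfFinAddOrder ((e t).1 i) := (Finsupp.applyAddHom i).isOfFinAddOrder hw
      obtain ⟨c, hc, h⟩ := isOfFinAddOrder_iff_nsmul_eq_zero.mp hwi
      have hm : (c:ℤ) * (e t).1 i = 0 := by
        rw [← nsmul_eq_mul]
        exact_mod_cast h
      have := (mul_eq_zero.mp hm).resolve_left (by exact_mod_cast hc.ne')
      simpa using this
    refine ⟨(e t).2, Subtype.ext ?_⟩
    show e.symm (0, (e t).2) = t
    rw [show ((0 : Fin n →₀ ℤ), (e t).2) = e t from Prod.ext hw0.symm rfl]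
    exact e.symm_apply_apply t
  have jinj : Function.Injective j := fun a b h => hj0 (congrArg Subtype.val h)
  let J : DirectSum ι (fun i => ZMod (p i ^ ex i)) ≃+ AddCommGroup.torsion G := AddEquiv.ofBijective j ⟨jinj, jsurj⟩
  constructor
  · rintro ⟨r, hr⟩
    haveI : IsAddCyclic (DirectSum ι (fun i => ZMod (p i ^ ex i))) := isAddCyclic_of_isGoodOrdering (hr.comap j0 hj0)
    exact isAddCyclic_of_surjective J.toAddMonoidHom J.surjective
  · intro hcyc
    haveI := hcyc
    haveI hcD : IsAddCyclic (DirectSum ι (fun i => ZMod (p i ^ ex i))) := isAddCyclic_of_surjective J.symm.toAddMonoidHom J.symm.surjective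
    haveI : Nonempty (DirectSum ι (fun i => ZMod (p i ^ ex i))) := ⟨0⟩
    have hk : Nat.card (DirectSum ι (fun i => ZMod (p i ^ ex i))) ≠ 0 := Nat.card_pos.ne'
    obtain ⟨r, hr⟩ := exists_goodOrdering_prod n (Nat.card (DirectSum ι (fun i => ZMod (p i ^ ex i)))) hk
    let eD : ZMod (Nat.card (DirectSum ι (fun i => ZMod (p i ^ ex i)))) ≃+ DirectSum ι (fun i => ZMod (p i ^ ex i)) := zmodAddCyclicAddEquiv hcD
    let f : G →+ (Fin n →₀ ℤ) × ZMod (Nat.card (DirectSum ι (fun i => ZMod (p i ^ ex i)))) :=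
      ((AddEquiv.refl (Fin n →₀ ℤ)).prodCongr eD.symm).toAddMonoidHom.comp e.toAddMonoidHom
    have hf : Function.Injective f :=
      (((AddEquiv.refl (Fin n →₀ ℤ)).prodCongr eD.symm).injective).comp e.injective
    exact ⟨_, hr.comap f hf⟩
end

section
/- Let π : G → H be a surjective homomorphism of abelian groups and let Y ⊆ H \ {0} admit a good-ordering. Then X := π⁻¹(Y) admits a good-ordering, and hence so does every subset of X. -/
theorem goodOrdering_mono {G : Type*} [AddCommGroup G] {X X' : Set G} {r : G → G → Prop}
    (h : IsGoodOrdering X r) (hsub : X' ⊆ X) : IsGoodOrdering X' r := by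
  obtain ⟨h1, h2, h3, h4⟩ := h
  exact ⟨fun x hx => h1 x (hsub hx),
    fun x hx y hy z hz => h2 x (hsub hx) y (hsub hy) z (hsub hz),
    fun x hx y hy => h3 x (hsub hx) y (hsub hy),
    fun x hx y hy hxy => h4 x (hsub hx) y (hsub hy) (hsub hxy)⟩

/-- If `π : G → H` is surjective and `Y ⊆ H \ {0}` admits a good-ordering, then so does
`π ⁻¹' Y`, and hence so does every subset of it. -/
theorem preimage_goodOrdering {G H : Type*} [AddCommGroup G] [AddCommGroup H] (π : G →+ H)
    (hπ : Function.Surjective π) (Y : Set H) (h0 : (0 : H) ∉ Y)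
    (hY : ∃ r : H → H → Prop, IsGoodOrdering Y r) :
    (∃ r : G → G → Prop, IsGoodOrdering (π ⁻¹' Y) r) ∧
      ∀ X ⊆ π ⁻¹' Y, ∃ r : G → G → Prop, IsGoodOrdering X r := by
  obtain ⟨r, h1, h2, h3, h4⟩ := hY
  set w : G → G → Prop := WellOrderingRel
  have hwtri : ∀ x y : G, x ≠ y → w x y ∨ w y x := by
    intro x y hxy
    rcases trichotomous_of w x y with h | h | h
    · exact Or.inl h
    · exact absurd h hxy
    · exact Or.inr h
  set s : G → G → Prop := fun x y => r (π x) (π y) ∨ (π x = π y ∧ w x y)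
  have hmain : IsGoodOrdering (π ⁻¹' Y) s := by
    refine ⟨?_, ?_, ?_, ?_⟩
    · rintro x hx (h | ⟨-, h⟩)
      · exact h1 (π x) hx h
      · exact irrefl_of w x h
    · rintro x hx y hy z hz (h | ⟨he, hw⟩) (h' | ⟨he', hw'⟩)
      · exact Or.inl (h2 _ hx _ hy _ hz h h')
      · exact Or.inl (he' ▸ h)
      · exact Or.inl (he ▸ h')
      · exact Or.inr ⟨he.trans he', trans_of w hw hw'⟩
    · intro x hx y hy hxy
      by_cases he : π x = π y
      · rcases hwtri x y hxy with h | h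
        · exact Or.inl (Or.inr ⟨he, h⟩)
        · exact Or.inr (Or.inr ⟨he.symm, h⟩)
      · rcases h3 _ hx _ hy he with h | h
        · exact Or.inl (Or.inl h)
        · exact Or.inr (Or.inl h)
    · rintro x hx y hy hxy ⟨ha, hb⟩
      have hπxy : π (x + y) = π x + π y := map_add π x y
      simp only [Set.mem_preimage] at hx hy hxy
      rw [hπxy] at hxy
      rcases ha with ha | ⟨ha, -⟩
      · rcases hb with hb | ⟨hb, -⟩
        · rw [hπxy] at ha hb
          exact h4 _ hx _ hy hxy ⟨ha, hb⟩
        · rw [hπxy, add_eq_right] at hb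
          exact h0 (hb ▸ hx)
      · rw [hπxy, left_eq_add] at ha
        exact h0 (ha ▸ hy)
  exact ⟨⟨s, hmain⟩, fun X hX => ⟨s, goodOrdering_mono hmain hX⟩⟩
end

section
/- Every finite subset X of the multiplicative group (F^×, ·) of a field F admits a good-ordering. -/
open Polynomial DirectSum

/-- `r` is a good-ordering of the subset `X` of a (multiplicative) abelian group. -/
def IsMulGoodOrdering {G : Type*} [CommGroup G] (X : Set G) (r : G → G → Prop) : Prop :=
  (∀ x ∈ X, ¬ r x x) ∧
  (∀ x ∈ X, ∀ y ∈ X, ∀ z ∈ X, r x y → r y z → r x z) ∧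
  (∀ x ∈ X, ∀ y ∈ X, x ≠ y → r x y ∨ r y x) ∧
  (∀ x ∈ X, ∀ y ∈ X, x * y ∈ X → ¬ (r x (x * y) ∧ r (x * y) y))

/-- If `c = a + b + z` for an integer `z`, then `Int.fract c` is not strictly between
`Int.fract a` and `Int.fract b`. -/
lemma fract_not_between {a b c : ℝ} (h : ∃ z : ℤ, c = a + b + z) :
    ¬ (Int.fract a < Int.fract c ∧ Int.fract c < Int.fract b) := by
  obtain ⟨z, rfl⟩ := h
  rintro ⟨h1, h2⟩
  have key : Int.fract (a + b + z) = Int.fract (Int.fract a + Int.fract b) := by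
    conv_lhs => rw [← Int.floor_add_fract a, ← Int.floor_add_fract b]
    rw [show ((⌊a⌋ : ℝ) + Int.fract a) + ((⌊b⌋ : ℝ) + Int.fract b) + (z : ℝ)
        = (Int.fract a + Int.fract b) + ((⌊a⌋ + ⌊b⌋ + z : ℤ) : ℝ) by push_cast; ring]
    rw [Int.fract_add_intCast]
  set s := Int.fract a + Int.fract b with hs
  rcases lt_or_ge s 1 with hlt | hge
  · have : Int.fract (a + b + z) = s :=
      key.trans (Int.fract_eq_self.mpr ⟨add_nonneg (Int.fract_nonneg a) (Int.fract_nonneg b), hlt⟩)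
    rw [this] at h2
    have : Int.fract b ≤ s := le_add_of_nonneg_left (Int.fract_nonneg a)
    linarith
  · have hlt2 : s - 1 < 1 := by
      have := Int.fract_lt_one a; have := Int.fract_lt_one b; simp [hs]; linarith
    have : Int.fract (a + b + z) = s - 1 := by
      rw [key]
      calc Int.fract s = Int.fract (s - 1) := (Int.fract_eq_fract.mpr ⟨1, by push_cast; ring⟩)
        _ = s - 1 := Int.fract_eq_self.mpr ⟨by linarith, hlt2⟩
    rw [this] at h1
    have := Int.fract_lt_one b
    linarith

/-- Every finite subset of the multiplicative group of a field admits a good-ordering. -/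
theorem field_units_goodOrdering {F : Type*} [Field F] (X : Set Fˣ) (hX : X.Finite) :
    ∃ r : Fˣ → Fˣ → Prop, IsMulGoodOrdering X r := by
  classical
  haveI : Finite X := hX
  set H : Subgroup Fˣ := Subgroup.closure X with hHdef
  haveI : Group.FG H := Group.closure_finite_fg X
  haveI : AddGroup.FG (Additive H) := GroupFG.iff_add_fg.mp ‹_›
  obtain ⟨n, ι, fι, p, hp, ee, ⟨e⟩⟩ :=
    AddCommGroup.equiv_free_prod_directSum_zmod (Additive H)
  haveI : ∀ i, NeZero (p i ^ ee i) := fun i => ⟨pow_ne_zero _ (hp i).pos.ne'⟩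
  haveI hPfin : Finite (⨁ i : ι, ZMod (p i ^ ee i)) :=
    Finite.of_equiv _ (DFinsupp.equivFunOnFintype (β := fun i => ZMod (p i ^ ee i))).symm
  -- the torsion part is cyclic, since it embeds into the units of the field
  set P := ⨁ i : ι, ZMod (p i ^ ee i) with hPdef
  let j : P →+ Additive H := e.symm.toAddMonoidHom.comp (AddMonoidHom.inr (Fin n →₀ ℤ) P)
  have hj : Function.Injective j := by
    intro a b hab
    have := e.symm.injective hab
    exact (Prod.mk.injEq _ _ _ _).mp this |>.2
  let f1 : Multiplicative P →* F :=
    (Units.coeHom F).comp <| H.subtype.comp <|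
      (MulEquiv.multiplicativeAdditive H).toMonoidHom.comp (AddMonoidHom.toMultiplicative j)
  have hf1 : Function.Injective f1 := by
    refine Units.val_injective.comp (Subtype.val_injective.comp ?_)
    refine (MulEquiv.multiplicativeAdditive H).injective.comp ?_
    intro a b hab
    exact hj hab
  haveI : IsCyclic (Multiplicative P) := isCyclic_of_subgroup_isDomain f1 hf1
  haveI hPcyc : IsAddCyclic P := isCyclic_multiplicative_iff.mp ‹_›
  set m : ℕ := Nat.card P with hmdef
  haveI : NeZero m := ⟨Nat.card_pos.ne'⟩
  let ψ : P ≃+ ZMod m := (zmodAddCyclicAddEquiv hPcyc).symm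
  set α : ℝ := liouvilleNumber 3 with hαdef
  have hα : Transcendental ℤ α := transcendental_liouvilleNumber (by norm_num)
  -- the quasi-additive real-valued function
  set F₀ : (Fin n →₀ ℤ) × P → ℝ :=
    fun a => (ZMod.val (ψ a.2) : ℝ) / m + ∑ i : Fin n, (a.1 i : ℝ) * α ^ ((i : ℕ) + 1)
    with hF₀def
  have hq : ∀ a b, ∃ z : ℤ, F₀ (a + b) = F₀ a + F₀ b + z := by
    intro a b
    set x := ZMod.val (ψ a.2) with hx
    set y := ZMod.val (ψ b.2) with hy
    refine ⟨-(((x + y) / m : ℕ) : ℤ), ?_⟩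
    have hnat : ((x + y) % m : ℕ) + m * ((x + y) / m) = x + y := Nat.mod_add_div _ _
    have hcast : (((x + y) % m : ℕ) : ℝ) = (x : ℝ) + y - m * (((x + y) / m : ℕ) : ℝ) := by
      have h2 := congrArg (fun t : ℕ => (t : ℝ)) hnat
      push_cast at h2
      linarith
    have hsum : ∑ i : Fin n, (((a.1 + b.1 : Fin n →₀ ℤ)) i : ℝ) * α ^ ((i : ℕ) + 1)
        = ∑ i : Fin n, (a.1 i : ℝ) * α ^ ((i : ℕ) + 1)
          + ∑ i : Fin n, (b.1 i : ℝ) * α ^ ((i : ℕ) + 1) := by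
      rw [← Finset.sum_add_distrib]
      refine Finset.sum_congr rfl fun i _ => ?_
      rw [Finsupp.add_apply]
      push_cast
      ring
    have hm0 : (m : ℝ) ≠ 0 := Nat.cast_ne_zero.mpr (NeZero.ne m)
    simp only [hF₀def, Prod.fst_add, Prod.snd_add]
    rw [hsum, map_add, ZMod.val_add, hcast]
    simp only [Int.cast_neg, Int.cast_natCast]
    rw [sub_div, add_div, mul_div_cancel_left₀ _ hm0]
    ring
  have hm0 : (m : ℝ) ≠ 0 := Nat.cast_ne_zero.mpr (NeZero.ne m)
  have hmpos : (0:ℝ) < m := by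
    have := Nat.pos_of_ne_zero (NeZero.ne m); exact_mod_cast this
  -- F₀ takes an integer value only at 0
  have hinj : ∀ a, (∃ z : ℤ, F₀ a = z) → a = 0 := by
    rintro a ⟨z, hz⟩
    by_cases hv : a.1 = 0
    · have hz' : (ZMod.val (ψ a.2) : ℝ) / m = z := by
        simpa [hF₀def, hv] using hz
      have hlt : (ZMod.val (ψ a.2) : ℝ) / m < 1 := by
        rw [div_lt_one hmpos]
        exact_mod_cast ZMod.val_lt (ψ a.2)
      have hge : (0:ℝ) ≤ (ZMod.val (ψ a.2) : ℝ) / m :=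
        div_nonneg (Nat.cast_nonneg _) hmpos.le
      have hz0 : z = 0 := by
        have h1 : (z:ℝ) < 1 := hz' ▸ hlt
        have h2 : (0:ℝ) ≤ (z:ℝ) := hz' ▸ hge
        have h1' : z < 1 := by exact_mod_cast h1
        have h2' : 0 ≤ z := by exact_mod_cast h2
        omega
      have hval0 : ZMod.val (ψ a.2) = 0 := by
        have : (ZMod.val (ψ a.2) : ℝ) = 0 := by
          field_simp [hz0] at hz'
          simpa [hz0] using hz'
        exact_mod_cast this
      have h2 : a.2 = 0 := by
        have : ψ a.2 = 0 := by
          have := (ZMod.val_eq_zero (n := m) (ψ a.2)).mp hval0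
          exact this
        exact (map_eq_zero_iff ψ ψ.injective).mp this
      exact Prod.ext hv h2
    · exfalso
      obtain ⟨i₀, hi₀⟩ : ∃ i₀, a.1 i₀ ≠ 0 := by
        by_contra hc
        push_neg at hc
        exact hv (Finsupp.ext hc)
      set q : ℤ[X] := C ((ZMod.val (ψ a.2) : ℤ) - z * m)
        + ∑ i : Fin n, C ((m : ℤ) * a.1 i) * Polynomial.X ^ ((i : ℕ) + 1) with hqdef
      have hqne : q ≠ 0 := by
        intro hq0
        have hco : q.coeff ((i₀ : ℕ) + 1) = (m : ℤ) * a.1 i₀ := by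
          rw [hqdef]
          rw [coeff_add, coeff_C, if_neg (Nat.succ_ne_zero _), zero_add]
          rw [finset_sum_coeff]
          rw [Finset.sum_eq_single i₀]
          · rw [coeff_C_mul, coeff_X_pow, if_pos rfl, mul_one]
          · intro i _ hi
            rw [coeff_C_mul, coeff_X_pow, if_neg, mul_zero]
            exact fun h => hi (Fin.ext (by omega))
          · intro h
            exact absurd (Finset.mem_univ i₀) h
        rw [hq0, coeff_zero] at hco
        have : (m : ℤ) * a.1 i₀ ≠ 0 :=
          mul_ne_zero (by exact_mod_cast NeZero.ne m) hi₀
        exact this hco.symm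
      have haev : (aeval α) q = 0 := by
        rw [hqdef]
        simp only [map_add, map_sum, aeval_C, map_mul, aeval_X, map_pow, eq_intCast, map_intCast]
        have hz2 : (ZMod.val (ψ a.2) : ℝ) + (m : ℝ) * ∑ i : Fin n, (a.1 i : ℝ) * α ^ ((i : ℕ) + 1)
            = z * m := by
          have h := hz
          simp only [hF₀def] at h
          have h3 : (ZMod.val (ψ a.2) : ℝ) / m
              = (z : ℝ) - ∑ i : Fin n, (a.1 i : ℝ) * α ^ ((i : ℕ) + 1) := by linarith
          have h4 := (div_eq_iff hm0).mp h3
          linear_combination h4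
        push_cast
        simp only [mul_assoc]
        rw [← Finset.mul_sum]
        linarith [hz2]
      exact hα ⟨q, hqne, haev⟩
  -- the ordering function on `Fˣ`
  set g : Fˣ → ℝ :=
    fun u => if h : u ∈ H then F₀ (e (Additive.ofMul (⟨u, h⟩ : H))) else 0 with hgdef
  have gval : ∀ (u : Fˣ) (h : u ∈ H), g u = F₀ (e (Additive.ofMul (⟨u, h⟩ : H))) :=
    fun u h => dif_pos h
  have hmem : ∀ x ∈ X, x ∈ H := fun x hx => Subgroup.subset_closure hx
  -- `Int.fract ∘ g` is injective on `H`
  have hdiff : ∀ (u v : Fˣ) (hu : u ∈ H) (hv : v ∈ H),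
      Int.fract (g u) = Int.fract (g v) → u = v := by
    intro u v hu hv hfr
    set a := e (Additive.ofMul (⟨u, hu⟩ : H)) with hadef
    set b := e (Additive.ofMul (⟨v, hv⟩ : H)) with hbdef
    obtain ⟨z, hz⟩ := Int.fract_eq_fract.mp hfr
    rw [gval u hu, gval v hv] at hz
    obtain ⟨z', hz'⟩ := hq (a - b) b
    rw [sub_add_cancel] at hz'
    have h0 : a - b = 0 := by
      refine hinj (a - b) ⟨z - z', ?_⟩
      push_cast
      rw [← hadef, ← hbdef] at hz
      linarith
    have hab : a = b := by rwa [sub_eq_zero] at h0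
    have := e.injective hab
    have := Additive.ofMul.injective this
    exact congrArg Subtype.val this
  -- the good ordering
  refine ⟨fun x y => Int.fract (g x) < Int.fract (g y), ?_, ?_, ?_, ?_⟩
  · intro x _
    exact lt_irrefl _
  · intro x _ y _ z _ h1 h2
    exact lt_trans h1 h2
  · intro x hx y hy hne
    rcases lt_trichotomy (Int.fract (g x)) (Int.fract (g y)) with h | h | h
    · exact Or.inl h
    · exact absurd (hdiff x y (hmem x hx) (hmem y hy) h) hne
    · exact Or.inr h
  · intro x hx y hy hxy
    have hx' := hmem x hx
    have hy' := hmem y hy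
    have hxy' := hmem _ hxy
    refine fract_not_between ?_
    obtain ⟨z, hz⟩ := hq (e (Additive.ofMul (⟨x, hx'⟩ : H))) (e (Additive.ofMul (⟨y, hy'⟩ : H)))
    refine ⟨z, ?_⟩
    rw [gval x hx', gval y hy', gval _ hxy']
    rw [show (⟨x * y, hxy'⟩ : H) = (⟨x, hx'⟩ : H) * (⟨y, hy'⟩ : H) from Subtype.ext rfl]
    rw [ofMul_mul, map_add]
    exact hz
end

section
/- (Reduction to abelian subgroups) Let L = ⊕_{g ∈ G} L_g be a Lie algebra over a field F graded by an arbitrary group (G,·) (so [L_g, L_h] ⊆ L_{g·h}). Then for elements g_1, ..., g_n ∈ G, if the left-normed bracket [L_{g_1}, L_{g_2}, ..., L_{g_n}] is nonzero, then g_1, ..., g_n commute pairwise. Consequently, the n-th term L^n of the lower central series of L is spanned by the subalgebras L_A^n, where A ranges over the abelian subgroups of G and L_A := ⊕_{a ∈ A} L_a. -/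
/-- The left-normed Lie bracket `[a, b₁, b₂, …]`. -/
def leftBracket {L : Type*} [LieRing L] : L → List L → L
  | a, [] => a
  | a, b :: t => leftBracket ⁅a, b⁆ t


set_option linter.unusedSectionVars false
set_option maxHeartbeats 1000000

section Aux

variable {F G L : Type*} [Field F] [Group G] [DecidableEq G]
  [LieRing L] [LieAlgebra F L]

lemma leftBracket_append (a : L) (l : List L) (y : L) :
    leftBracket a (l ++ [y]) = ⁅leftBracket a l, y⁆ := by
  induction l generalizing a with
  | nil => rfl
  | cons b t ih => simpa [leftBracket] using ih ⁅a, b⁆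

lemma leftBracket_zero (l : List L) : leftBracket (0 : L) l = 0 := by
  induction l with
  | nil => rfl
  | cons b t ih => simp [leftBracket, ih]

variable (Lg : G → Submodule F L)

lemma deg_unique (hint : DirectSum.IsInternal Lg) {z : L} {g h : G}
    (hz : z ≠ 0) (hg : z ∈ Lg g) (hh : z ∈ Lg h) : g = h := by
  by_contra hne
  exact hz ((Submodule.disjoint_def.mp
    (hint.submodule_iSupIndep.pairwiseDisjoint hne)) z hg hh)

lemma comm2 (hint : DirectSum.IsInternal Lg)
    (hgr : ∀ g h : G, ∀ x ∈ Lg g, ∀ y ∈ Lg h, ⁅x, y⁆ ∈ Lg (g * h))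
    {u v : L} {g h : G} (hu : u ∈ Lg g) (hv : v ∈ Lg h) (hne : ⁅u, v⁆ ≠ 0) :
    Commute g h := by
  have h1 : ⁅u, v⁆ ∈ Lg (g * h) := hgr _ _ _ hu _ hv
  have h2 : ⁅u, v⁆ ∈ Lg (h * g) := by
    rw [← lie_skew]
    exact neg_mem (hgr _ _ _ hv _ hu)
  exact deg_unique Lg hint hne h1 h2

lemma lb_mem (hgr : ∀ g h : G, ∀ x ∈ Lg g, ∀ y ∈ Lg h, ⁅x, y⁆ ∈ Lg (g * h)) :
    ∀ (l : List (G × L)) (a : L) (g : G), a ∈ Lg g → (∀ p ∈ l, p.2 ∈ Lg p.1) →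
    leftBracket a (l.map Prod.snd) ∈ Lg (g * (l.map Prod.fst).prod) := by
  intro l
  induction l with
  | nil => intro a g ha _; simpa [leftBracket] using ha
  | cons p t ih =>
    intro a g ha hl
    simp only [List.map_cons, List.prod_cons, leftBracket]
    rw [← mul_assoc]
    exact ih ⁅a, p.2⁆ (g * p.1) (hgr _ _ _ ha _ (hl p (by simp)))
      (fun q hq => hl q (by simp [hq]))

/-- cancel: commuting with `s` and `s * q` gives commuting with `q`. -/
lemma commute_cancel {x s q : G} (hs : Commute x s) (hsq : Commute x (s * q)) :
    Commute x q := by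
  have := hs.inv_right.mul_right hsq
  rwa [inv_mul_cancel_left] at this

lemma main_comm (hint : DirectSum.IsInternal Lg)
    (hgr : ∀ g h : G, ∀ x ∈ Lg g, ∀ y ∈ Lg h, ⁅x, y⁆ ∈ Lg (g * h)) :
    ∀ (n : ℕ) (l : List (G × L)) (a : L) (g : G), l.length = n →
    a ∈ Lg g → (∀ p ∈ l, p.2 ∈ Lg p.1) →
    leftBracket a (l.map Prod.snd) ≠ 0 →
    ∀ x ∈ g :: l.map Prod.fst, ∀ y ∈ g :: l.map Prod.fst, Commute x y := by
  intro n
  induction n using Nat.strong_induction_on with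
  | _ n ihn =>
  intro l a g hlen ha hl hne
  rcases l.eq_nil_or_concat with rfl | ⟨t', q, rfl⟩
  · simp only [List.map_nil, List.mem_singleton]
    rintro x rfl y rfl; exact Commute.refl _
  rcases t'.eq_nil_or_concat with rfl | ⟨t, p, rfl⟩
  · -- l = [q]
    simp only [List.concat_eq_append, List.nil_append] at hlen hl hne ⊢
    have hb : ⁅a, q.2⁆ ≠ 0 := by
      simpa [leftBracket] using hne
    have hc : Commute g q.1 := comm2 Lg hint hgr ha (hl q (by simp)) hb
    simp only [List.map_cons, List.map_nil, List.mem_cons,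
      List.not_mem_nil, or_false]
    rintro x (rfl | rfl) y (rfl | rfl)
    · exact Commute.refl _
    · exact hc
    · exact hc.symm
    · exact Commute.refl _
  · -- l = t ++ [p, q]
    simp only [List.concat_eq_append, List.append_assoc, List.singleton_append,
      List.cons_append, List.nil_append] at hlen hl hne ⊢
    set m := leftBracket a (t.map Prod.snd) with hm
    have hmapsnd : (t ++ [p, q]).map Prod.snd = (t.map Prod.snd ++ [p.2]) ++ [q.2] := by simp
    have hW : leftBracket a ((t ++ [p, q]).map Prod.snd) = ⁅⁅m, p.2⁆, q.2⁆ := by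
      rw [hmapsnd, leftBracket_append, leftBracket_append]
    have hlent : t.length + 2 = n := by simpa using hlen
    -- homogeneity restricted to t
    have hlt : ∀ r ∈ t, r.2 ∈ Lg r.1 := fun r hr => hl r (by simp [hr])
    have hp2 : p.2 ∈ Lg p.1 := hl p (by simp)
    have hq2 : q.2 ∈ Lg q.1 := hl q (by simp)
    -- the prefix [m, p.2] is nonzero
    have hWne : ⁅⁅m, p.2⁆, q.2⁆ ≠ 0 := hW ▸ hne
    have hmp : ⁅m, p.2⁆ ≠ 0 := fun h => hWne (by rw [h, zero_lie])
    have hmpLB : leftBracket a ((t ++ [p]).map Prod.snd) = ⁅m, p.2⁆ := by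
      rw [List.map_append]; simpa using leftBracket_append a (t.map Prod.snd) p.2
    have C1 : ∀ x ∈ g :: (t ++ [p]).map Prod.fst, ∀ y ∈ g :: (t ++ [p]).map Prod.fst,
        Commute x y := by
      refine ihn (t.length + 1) (by omega) (t ++ [p]) a g (by simp) ha
        (fun r hr => hl r (by simp at hr ⊢; tauto)) (by rw [hmpLB]; exact hmp)
    have hmemC1 : ∀ x : G, x ∈ g :: (t ++ [p]).map Prod.fst ↔
        (x ∈ g :: t.map Prod.fst ∨ x = p.1) := by
      intro x; simp [or_assoc]
    have Hp : ∀ x ∈ g :: t.map Prod.fst, Commute x p.1 := fun x hx =>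
      C1 x ((hmemC1 x).mpr (Or.inl hx)) p.1 ((hmemC1 _).mpr (Or.inr rfl))
    -- Jacobi split
    have hsplit : ⁅⁅m, p.2⁆, q.2⁆ = ⁅⁅m, q.2⁆, p.2⁆ + ⁅m, ⁅p.2, q.2⁆⁆ := by
      rw [leibniz_lie m p.2 q.2, ← lie_skew p.2 ⁅m, q.2⁆]
      abel
    have hAB : ⁅⁅m, q.2⁆, p.2⁆ ≠ 0 ∨ ⁅m, ⁅p.2, q.2⁆⁆ ≠ 0 := by
      by_contra hcon
      push_neg at hcon
      exact hWne (by rw [hsplit, hcon.1, hcon.2, add_zero])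
    -- in both cases we produce Hq and Hpq
    have key : (∀ x ∈ g :: t.map Prod.fst, Commute x q.1) ∧ Commute p.1 q.1 := by
      rcases hAB with hA | hB
      · -- case A
        have hmq : ⁅m, q.2⁆ ≠ 0 := fun h => hA (by rw [h, zero_lie])
        have hmqLB : leftBracket a ((t ++ [q]).map Prod.snd) = ⁅m, q.2⁆ := by
          rw [List.map_append]; simpa using leftBracket_append a (t.map Prod.snd) q.2
        have C2 : ∀ x ∈ g :: (t ++ [q]).map Prod.fst, ∀ y ∈ g :: (t ++ [q]).map Prod.fst,
            Commute x y := by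
          refine ihn (t.length + 1) (by omega) (t ++ [q]) a g (by simp) ha
            (fun r hr => by simp at hr; rcases hr with hr | rfl; exacts [hlt r hr, hq2])
            (by rw [hmqLB]; exact hmq)
        have hmemC2 : ∀ x : G, x ∈ g :: (t ++ [q]).map Prod.fst ↔
            (x ∈ g :: t.map Prod.fst ∨ x = q.1) := by
          intro x; simp [or_assoc]
        have Hq : ∀ x ∈ g :: t.map Prod.fst, Commute x q.1 := fun x hx =>
          C2 x ((hmemC2 x).mpr (Or.inl hx)) q.1 ((hmemC2 _).mpr (Or.inr rfl))
        refine ⟨Hq, ?_⟩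
        -- p.1 commutes with q.1 : via degree of ⁅m,q.2⁆
        have hmem : ⁅m, q.2⁆ ∈ Lg (g * ((t ++ [q]).map Prod.fst).prod) := by
          rw [← hmqLB]
          exact lb_mem Lg hgr (t ++ [q]) a g ha
            (fun r hr => by simp at hr; rcases hr with hr | rfl; exacts [hlt r hr, hq2])
        have hcpr : Commute (g * ((t ++ [q]).map Prod.fst).prod) p.1 :=
          comm2 Lg hint hgr hmem hp2 hA
        have hprod : g * ((t ++ [q]).map Prod.fst).prod
            = (g * (t.map Prod.fst).prod) * q.1 := by
          simp [mul_assoc]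
        have hps : Commute p.1 (g * (t.map Prod.fst).prod) := by
          have : ∀ x ∈ g :: t.map Prod.fst, Commute p.1 x := fun x hx => (Hp x hx).symm
          have h2 := Commute.list_prod_right (g :: t.map Prod.fst) p.1 this
          simpa using h2
        exact commute_cancel hps (by rw [← hprod]; exact hcpr.symm)
      · -- case B
        have hpq2 : ⁅p.2, q.2⁆ ≠ 0 := fun h => hB (by rw [h, lie_zero])
        have Hpq : Commute p.1 q.1 := comm2 Lg hint hgr hp2 hq2 hpq2
        have hBLB : leftBracket a ((t ++ [(p.1 * q.1, ⁅p.2, q.2⁆)]).map Prod.snd)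
            = ⁅m, ⁅p.2, q.2⁆⁆ := by
          rw [List.map_append]; simpa using leftBracket_append a (t.map Prod.snd) ⁅p.2, q.2⁆
        have C3 : ∀ x ∈ g :: (t ++ [(p.1 * q.1, ⁅p.2, q.2⁆)]).map Prod.fst,
            ∀ y ∈ g :: (t ++ [(p.1 * q.1, ⁅p.2, q.2⁆)]).map Prod.fst, Commute x y := by
          refine ihn (t.length + 1) (by omega) _ a g (by simp) ha
            (fun r hr => by
              simp only [List.mem_append, List.mem_singleton] at hr
              rcases hr with hr | rfl
              · exact hlt r hr
              · exact hgr _ _ _ hp2 _ hq2)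
            (by rw [hBLB]; exact hB)
        have hmemC3 : ∀ x : G, x ∈ g :: (t ++ [(p.1 * q.1, ⁅p.2, q.2⁆)]).map Prod.fst ↔
            (x ∈ g :: t.map Prod.fst ∨ x = p.1 * q.1) := by
          intro x; simp [or_assoc]
        have Hq : ∀ x ∈ g :: t.map Prod.fst, Commute x q.1 := by
          intro x hx
          have h1 : Commute x (p.1 * q.1) :=
            C3 x ((hmemC3 x).mpr (Or.inl hx)) _ ((hmemC3 _).mpr (Or.inr rfl))
          exact commute_cancel (Hp x hx) h1
        exact ⟨Hq, Hpq⟩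
    obtain ⟨Hq, Hpq⟩ := key
    -- assemble
    have hmemL : ∀ x : G, x ∈ g :: (t ++ [p, q]).map Prod.fst ↔
        (x ∈ g :: t.map Prod.fst ∨ x = p.1 ∨ x = q.1) := by
      intro x; simp [or_assoc]
    intro x hx y hy
    rw [hmemL] at hx hy
    rcases hx with hx | rfl | rfl <;> rcases hy with hy | rfl | rfl
    · exact C1 x ((hmemC1 x).mpr (Or.inl hx)) y ((hmemC1 y).mpr (Or.inl hy))
    · exact Hp x hx
    · exact Hq x hx
    · exact (Hp y hy).symm
    · exact Commute.refl _
    · exact Hpq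
    · exact (Hq y hy).symm
    · exact Hpq.symm
    · exact Commute.refl _

end Aux

lemma closure_comm {G : Type*} [Group G] {s : Set G}
    (hs : ∀ a ∈ s, ∀ b ∈ s, Commute a b) :
    ∀ a ∈ Subgroup.closure s, ∀ b ∈ Subgroup.closure s, a * b = b * a := by
  intro a ha b hb
  exact Subgroup.closure_induction₂ (p := fun x y _ _ => Commute x y)
    (fun x y hx hy => hs x hx y hy)
    (fun x _ => Commute.one_left x)
    (fun x _ => Commute.one_right x)
    (fun x y z _ _ _ h1 h2 => h1.mul_left h2)
    (fun y z x _ _ _ h1 h2 => h1.mul_right h2)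
    (fun x y _ _ h => h.inv_left)
    (fun x y _ _ h => h.inv_right)
    ha hb

lemma lb_lcs {F L : Type*} [Field F] [LieRing L] [LieAlgebra F L] :
    ∀ (l : List L) (a : L) (k : ℕ), a ∈ LieModule.lowerCentralSeries F L L k →
    leftBracket a l ∈ LieModule.lowerCentralSeries F L L (k + l.length) := by
  intro l
  induction l with
  | nil => intro a k ha; simpa [leftBracket] using ha
  | cons b t ih =>
    intro a k ha
    have hb : ⁅a, b⁆ ∈ LieModule.lowerCentralSeries F L L (k + 1) := by
      rw [LieModule.lowerCentralSeries_succ, ← lie_skew]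
      exact neg_mem (LieSubmodule.lie_mem_lie (LieSubmodule.mem_top b) ha)
    have h2 := ih ⁅a, b⁆ (k + 1) hb
    have heq : k + 1 + t.length = k + (b :: t).length := by
      simp [List.length_cons]; omega
    rw [heq] at h2
    exact h2

lemma ofFn_snoc_succ {α : Type*} {n : ℕ} (x : Fin (n + 1) → α) (y : α) :
    (List.ofFn fun i : Fin (n + 1) => (Fin.snoc x y : Fin (n + 2) → α) i.succ)
      = (List.ofFn fun i : Fin n => x i.succ) ++ [y] := by
  rw [List.ofFn_succ', List.concat_eq_append]
  congr 1
  · apply congrArg List.ofFn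
    funext i
    show (Fin.snoc x y : Fin (n + 2) → α) (i.castSucc).succ = x i.succ
    rw [Fin.succ_castSucc, Fin.snoc_castSucc]
  · show [(Fin.snoc x y : Fin (n + 2) → α) (Fin.last n).succ] = [y]
    rw [Fin.succ_last, Fin.snoc_last]


/-- Reduction to abelian subgroups: in a group-graded Lie algebra, a nonzero left-normed
bracket of homogeneous elements forces the degrees to commute pairwise; consequently each
term of the lower central series is spanned by left-normed brackets of homogeneous
elements whose degrees lie in a common abelian subgroup. -/
theorem graded_reduction_to_abelian {F G L : Type*} [Field F] [Group G] [DecidableEq G]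
    [LieRing L] [LieAlgebra F L] (Lg : G → Submodule F L)
    (hint : DirectSum.IsInternal Lg)
    (hgr : ∀ g h : G, ∀ x ∈ Lg g, ∀ y ∈ Lg h, ⁅x, y⁆ ∈ Lg (g * h)) :
    (∀ n : ℕ, ∀ gs : Fin (n + 1) → G, ∀ x : Fin (n + 1) → L,
      (∀ i, x i ∈ Lg (gs i)) →
      leftBracket (x 0) (List.ofFn fun i : Fin n => x i.succ) ≠ 0 →
      ∀ i j, gs i * gs j = gs j * gs i) ∧
    (∀ n : ℕ, (LieModule.lowerCentralSeries F L L n : Submodule F L) =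
      Submodule.span F { z : L |
        ∃ (A : Subgroup G) (gs : Fin (n + 1) → G) (x : Fin (n + 1) → L),
          (∀ a ∈ A, ∀ b ∈ A, a * b = b * a) ∧ (∀ i, gs i ∈ A) ∧
          (∀ i, x i ∈ Lg (gs i)) ∧
          z = leftBracket (x 0) (List.ofFn fun i : Fin n => x i.succ) }) := by
  have part1 : ∀ n : ℕ, ∀ gs : Fin (n + 1) → G, ∀ x : Fin (n + 1) → L,
      (∀ i, x i ∈ Lg (gs i)) →
      leftBracket (x 0) (List.ofFn fun i : Fin n => x i.succ) ≠ 0 →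
      ∀ i j, gs i * gs j = gs j * gs i := by
    intro n gs x hx hne i j
    set l : List (G × L) := List.ofFn (fun i : Fin n => (gs i.succ, x i.succ)) with hldef
    have hsnd : l.map Prod.snd = List.ofFn fun i : Fin n => x i.succ := by
      simp only [hldef, List.map_ofFn]; rfl
    have hfst : l.map Prod.fst = List.ofFn fun i : Fin n => gs i.succ := by
      simp only [hldef, List.map_ofFn]; rfl
    have H := main_comm Lg hint hgr l.length l (x 0) (gs 0) rfl (hx 0)
      (by
        intro p hp
        rw [hldef, List.mem_ofFn] at hp
        obtain ⟨k, rfl⟩ := hp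
        exact hx k.succ)
      (by rw [hsnd]; exact hne)
    have hmem : ∀ i : Fin (n + 1), gs i ∈ (gs 0) :: l.map Prod.fst := by
      intro i
      induction i using Fin.cases with
      | zero => exact List.mem_cons_self
      | succ k =>
        refine List.mem_cons_of_mem _ ?_
        rw [hfst, List.mem_ofFn]
        exact ⟨k, rfl⟩
    exact H (gs i) (hmem i) (gs j) (hmem j)
  refine ⟨part1, ?_⟩
  let S : ℕ → Set L := fun k => { z : L |
      ∃ (A : Subgroup G) (gs : Fin (k + 1) → G) (x : Fin (k + 1) → L),
        (∀ a ∈ A, ∀ b ∈ A, a * b = b * a) ∧ (∀ i, gs i ∈ A) ∧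
        (∀ i, x i ∈ Lg (gs i)) ∧
        z = leftBracket (x 0) (List.ofFn fun i : Fin k => x i.succ) }
  have main2 : ∀ n : ℕ, (LieModule.lowerCentralSeries F L L n : Submodule F L) =
      Submodule.span F (S n) := by
    intro n
    induction n with
    | zero =>
      apply le_antisymm
      · rw [LieIdeal.toLieSubalgebra_toSubmodule,
          LieModule.lowerCentralSeries_zero, LieSubmodule.top_toSubmodule,
          ← hint.submodule_iSup_eq_top]
        apply iSup_le
        intro g w hw
        refine Submodule.subset_span
          ⟨Subgroup.closure {g}, fun _ => g, fun _ => w, ?_, ?_, fun _ => hw, ?_⟩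
        · refine closure_comm ?_
          intro a ha b hb
          rw [Set.mem_singleton_iff] at ha hb
          subst ha; subst hb; exact Commute.refl _
        · exact fun _ => Subgroup.subset_closure (Set.mem_singleton g)
        · rw [List.ofFn_zero]
          rfl
      · rw [LieIdeal.toLieSubalgebra_toSubmodule,
          LieModule.lowerCentralSeries_zero, LieSubmodule.top_toSubmodule]
        exact le_top
    | succ n IH =>
      have core : ∀ (m : L), m ∈ S n → ∀ (h : G) (y : L), y ∈ Lg h →
          ⁅m, y⁆ ∈ Submodule.span F (S (n + 1)) := by
        rintro m ⟨A, gs, xv, hA, hgA, hxv, rfl⟩ h y hy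
        by_cases hz : ⁅leftBracket (xv 0) (List.ofFn fun i : Fin n => xv i.succ), y⁆ = 0
        · rw [hz]; exact zero_mem _
        · set gs' : Fin (n + 2) → G := Fin.snoc gs h with hgs'
          set x' : Fin (n + 2) → L := Fin.snoc xv y with hx'
          have hx'0 : x' 0 = xv 0 := by
            rw [hx']
            have h0 := Fin.snoc_castSucc (α := fun _ : Fin (n + 2) => L)
              (p := xv) (x := y) (i := 0)
            simpa using h0
          have hlist : (List.ofFn fun i : Fin (n + 1) => x' i.succ)
              = (List.ofFn fun i : Fin n => xv i.succ) ++ [y] := ofFn_snoc_succ xv y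
          have hxg : ∀ i, x' i ∈ Lg (gs' i) := by
            intro i
            induction i using Fin.lastCases with
            | last =>
              rw [hx', hgs', Fin.snoc_last, Fin.snoc_last]; exact hy
            | cast k =>
              rw [hx', hgs', Fin.snoc_castSucc, Fin.snoc_castSucc]; exact hxv k
          have hbr : leftBracket (x' 0) (List.ofFn fun i : Fin (n + 1) => x' i.succ)
              = ⁅leftBracket (xv 0) (List.ofFn fun i : Fin n => xv i.succ), y⁆ := by
            rw [hx'0, hlist, leftBracket_append]
          have hcomm := part1 (n + 1) gs' x' hxg (by rw [hbr]; exact hz)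
          refine Submodule.subset_span
            ⟨Subgroup.closure (Set.range gs'), gs', x', ?_, ?_, hxg, hbr.symm⟩
          · refine closure_comm ?_
            rintro a ⟨i, rfl⟩ b ⟨j, rfl⟩
            exact hcomm i j
          · exact fun i => Subgroup.subset_closure ⟨i, rfl⟩
      have step1 : ∀ m ∈ S n, ∀ u : L, ⁅m, u⁆ ∈ Submodule.span F (S (n + 1)) := by
        intro m hm u
        have hu : u ∈ (⊤ : Submodule F L) := trivial
        rw [← hint.submodule_iSup_eq_top] at hu
        refine Submodule.iSup_induction (motive := fun w => ⁅m, w⁆ ∈ Submodule.span F (S (n + 1)))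
          Lg hu ?_ ?_ ?_
        · intro g w hw; exact core m hm g w hw
        · show ⁅m, (0 : L)⁆ ∈ Submodule.span F (S (n + 1))
          rw [lie_zero]; exact zero_mem _
        · intro a b ha hb; rw [lie_add]; exact add_mem ha hb
      have step2 : ∀ u : L, ∀ m ∈ Submodule.span F (S n),
          ⁅m, u⁆ ∈ Submodule.span F (S (n + 1)) := by
        intro u m hm
        refine Submodule.span_induction
          (p := fun m _ => ⁅m, u⁆ ∈ Submodule.span F (S (n + 1))) ?_ ?_ ?_ ?_ hm
        · intro w hw; exact step1 w hw u
        · show ⁅(0 : L), u⁆ ∈ Submodule.span F (S (n + 1))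
          rw [zero_lie]; exact zero_mem _
        · intro a b _ _ ha hb; rw [add_lie]; exact add_mem ha hb
        · intro c a _ ha; rw [smul_lie]; exact Submodule.smul_mem _ _ ha
      apply le_antisymm
      · rw [LieIdeal.toLieSubalgebra_toSubmodule,
          LieModule.lowerCentralSeries_succ, LieSubmodule.lieIdeal_oper_eq_linear_span']
        refine Submodule.span_le.mpr ?_
        rintro z ⟨u, -, m, hm, rfl⟩
        have hm' : m ∈ Submodule.span F (S n) := by rw [← IH]; exact hm
        have h1 := step2 u m hm'
        show ⁅u, m⁆ ∈ Submodule.span F (S (n + 1))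
        rw [← lie_skew]
        exact neg_mem h1
      · refine Submodule.span_le.mpr ?_
        rintro z ⟨A, gs, xv, hA, hgA, hxv, rfl⟩
        have h2 := lb_lcs (F := F) (List.ofFn fun i : Fin (n + 1) => xv i.succ) (xv 0) 0
          (by rw [LieModule.lowerCentralSeries_zero]; exact LieSubmodule.mem_top _)
        rw [List.length_ofFn] at h2
        show leftBracket (xv 0) (List.ofFn fun i : Fin (n + 1) => xv i.succ)
            ∈ LieSubmodule.toSubmodule (LieModule.lowerCentralSeries F L L (n + 1))
        rw [LieSubmodule.mem_toSubmodule]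
        simpa using h2
  exact main2
end

section
/- Let r(z) ∈ F[z] be an irreducible polynomial over F, where F = ℚ or F = 𝔽_p, with r(0)·r(1) ≠ 0. Then the set X of roots of r in an algebraic closure of F is an arithmetically-free subset of the multiplicative group (F̄^×, ·). -/
open Polynomial

lemma arithfree_aux {F K : Type*} [Field F] [Field K] [Algebra F K]
    (r : Polynomial F) (hirr : Irreducible r) (h0 : r.eval 0 ≠ 0) (h1 : r.eval 1 ≠ 0) :
    ¬ ∃ x ∈ r.rootSet K, ∃ y ∈ r.rootSet K, ∀ n : ℤ, x * y ^ n ∈ r.rootSet K := by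
  classical
  rintro ⟨x, hx, y, hy, h⟩
  have hr0 : r ≠ 0 := hirr.ne_zero
  have hinj := (algebraMap F K).injective
  have haeval : ∀ z ∈ r.rootSet K, aeval z r = 0 := fun z hz => (mem_rootSet.mp hz).2
  have hne : ∀ z ∈ r.rootSet K, z ≠ 0 := by
    rintro z hz rfl
    have := haeval 0 hz
    rw [aeval_def, eval₂_at_zero, coeff_zero_eq_eval_zero] at this
    exact h0 (hinj (by simpa using this))
  have hxne : x ≠ 0 := hne x hx
  have hyne : y ≠ 0 := hne y hy
  set u : Kˣ := Units.mk0 y hyne with hu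
  -- y has finite order
  have hfin : IsOfFinOrder u := by
    obtain ⟨a, -, b, -, hab, heq⟩ :=
      Set.infinite_univ.exists_ne_map_eq_of_mapsTo
        (f := fun n : ℤ => x * y ^ n) (fun n _ => h n) (r.rootSet_finite K)
    have hyab : y ^ a = y ^ b := mul_left_cancel₀ hxne heq
    have huab : u ^ a = u ^ b := Units.ext (by simpa [hu] using hyab)
    rcases lt_or_gt_of_ne hab with hlt | hlt
    · refine isOfFinOrder_iff_pow_eq_one.mpr ⟨(b - a).toNat, by omega, ?_⟩
      have huab' : u ^ (b - a) = 1 := by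
        rw [zpow_sub, ← huab, mul_inv_cancel]
      rwa [← zpow_natCast, Int.toNat_of_nonneg (by omega)]
    · refine isOfFinOrder_iff_pow_eq_one.mpr ⟨(a - b).toNat, by omega, ?_⟩
      have huab' : u ^ (a - b) = 1 := by
        rw [zpow_sub, huab, mul_inv_cancel]
      rwa [← zpow_natCast, Int.toNat_of_nonneg (by omega)]
  set m : ℕ := orderOf u with hm
  have hmpos : 0 < m := hfin.orderOf_pos
  have hym : y ^ m = 1 := by
    have : u ^ m = 1 := pow_orderOf_eq_one u
    simpa [hu] using congrArg (fun w : Kˣ => (w : K)) this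
  -- r divides X^m - 1
  have hdvd : r ∣ (X ^ m - 1 : F[X]) := by
    have hd1 : r ∣ minpoly F y :=
      (minpoly.eq_of_irreducible hirr (haeval y hy)) ▸ Dvd.intro _ rfl
    have hd2 : minpoly F y ∣ (X ^ m - 1 : F[X]) :=
      minpoly.dvd F y (by simp [hym])
    exact hd1.trans hd2
  -- every root of r is an m-th root of unity
  have hroot : ∀ z ∈ r.rootSet K, z ^ m = 1 := by
    intro z hz
    obtain ⟨q, hq⟩ := hdvd
    have hz0 : aeval z (X ^ m - 1 : F[X]) = 0 := by
      rw [hq, map_mul, haeval z hz, zero_mul]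
    have : z ^ m - 1 = 0 := by simpa using hz0
    exact sub_eq_zero.mp this
  have hxm : x ^ m = 1 := hroot x hx
  -- the set {x * y^i : i < m} has m elements, all m-th roots of unity
  set T : Finset K := (Finset.range m).image (fun i => x * y ^ i) with hT
  have hTcard : T.card = m := by
    rw [hT, Finset.card_image_of_injOn, Finset.card_range]
    intro i hi j hj hij
    simp only [Finset.coe_range, Set.mem_Iio] at hi hj
    have : y ^ i = y ^ j := mul_left_cancel₀ hxne hij
    have hup : u ^ i = u ^ j := Units.ext (by simpa [hu] using this)
    have := pow_eq_pow_iff_modEq.mp hup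
    rwa [Nat.ModEq, Nat.mod_eq_of_lt hi, Nat.mod_eq_of_lt hj] at this
  have hTsub : T ⊆ nthRootsFinset m (1 : K) := by
    intro z hz
    rw [hT, Finset.mem_image] at hz
    obtain ⟨i, -, rfl⟩ := hz
    rw [mem_nthRootsFinset hmpos (1 : K), mul_pow, ← pow_mul, mul_comm i m, pow_mul, hym,
      one_pow, hxm, mul_one]
  have hNcard : (nthRootsFinset m (1 : K)).card ≤ m := by
    rw [nthRootsFinset_def]
    exact le_trans (Multiset.toFinset_card_le _) (by simpa using card_nthRoots m (1 : K))
  have hTeq : T = nthRootsFinset m (1 : K) :=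
    Finset.eq_of_subset_of_card_le hTsub (by omega)
  have h1T : (1 : K) ∈ T := hTeq ▸ one_mem_nthRootsFinset hmpos
  rw [hT, Finset.mem_image] at h1T
  obtain ⟨i, -, hi⟩ := h1T
  have h1root : (1 : K) ∈ r.rootSet K := by
    have := h (i : ℤ)
    rwa [zpow_natCast, hi] at this
  have := haeval 1 h1root
  rw [aeval_def, eval₂_at_one] at this
  exact h1 (hinj (by simpa using this))

/-- For `F = ℚ` or `F = 𝔽_p`: the root set of an irreducible polynomial `r` over `F` with
`r(0)·r(1) ≠ 0` is arithmetically-free in the multiplicative group of the algebraic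
closure of `F`. -/
theorem rootSet_arithmeticallyFree :
    (∀ r : Polynomial ℚ, Irreducible r → r.eval 0 * r.eval 1 ≠ 0 →
      ¬ ∃ x ∈ r.rootSet (AlgebraicClosure ℚ), ∃ y ∈ r.rootSet (AlgebraicClosure ℚ),
        ∀ n : ℤ, x * y ^ n ∈ r.rootSet (AlgebraicClosure ℚ)) ∧
    (∀ (p : ℕ) [Fact p.Prime], ∀ r : Polynomial (ZMod p), Irreducible r →
      r.eval 0 * r.eval 1 ≠ 0 →
      ¬ ∃ x ∈ r.rootSet (AlgebraicClosure (ZMod p)),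
        ∃ y ∈ r.rootSet (AlgebraicClosure (ZMod p)),
          ∀ n : ℤ, x * y ^ n ∈ r.rootSet (AlgebraicClosure (ZMod p))) := by
  constructor
  · intro r hirr h01
    exact arithfree_aux r hirr (left_ne_zero_of_mul h01) (right_ne_zero_of_mul h01)
  · intro p _ r hirr h01
    exact arithfree_aux r hirr (left_ne_zero_of_mul h01) (right_ne_zero_of_mul h01)
end
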